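/- Let $G$ be the graph on vertices $x_1,\ldots,x_6$ with edges $\{x_1,x_2\}, \{x_1,x_3\}, \{x_2,x_3\}, \{x_3,x_4\}, \{x_4,x_5\}, \{x_4,x_6\}$, and let $\mathfrak{c} = (1,1,1,1,1,1)$. Then $\delta_{\mathfrak{c}}(I(G)) = 2$, the monomials $x_1x_3x_4x_5$ and $x_2x_3x_4x_6$ are minimal monomial generators of $(I(G)^2)_{\mathfrak{c}}$, but $x_3x_4x_5x_6$ is not in $(I(G)^2)_{\mathfrak{c}}$; hence $\mathcal{W}(\mathfrak{c},G)$ does not enjoy the strong exchange property. -/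

import Mathlib

open Finset

/-- A monomial with exponent vector `a` belongs to the `q`-th power of the edge ideal of `G`:
it is divisible by a product of `q` edges of `G`. -/
def memPow {n : ℕ} (G : SimpleGraph (Fin n)) (q : ℕ) (a : Fin n → ℕ) : Prop :=
  ∃ e : Fin q → Fin n × Fin n, (∀ i, G.Adj (e i).1 (e i).2) ∧
    ∀ j, (∑ i, ((if (e i).1 = j then 1 else 0) + (if (e i).2 = j then 1 else 0))) ≤ a j

/-- The exponent vector `a` is componentwise bounded by `c`. -/
def bdd {n : ℕ} (c a : Fin n → ℕ) : Prop := ∀ i, a i ≤ c i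

/-- `δ_c(I(G))`: the largest `q` such that `(I(G)^q)_c ≠ 0`, i.e. such that some
`c`-bounded monomial lies in `I(G)^q`. -/
noncomputable def deltaC {n : ℕ} (G : SimpleGraph (Fin n)) (c : Fin n → ℕ) : ℕ :=
  sSup {q | ∃ a, bdd c a ∧ memPow G q a}

/-- `W(c,G)`: the minimal monomial generators of `(I(G)^{δ_c(I(G))})_c`, i.e. the
`c`-bounded monomials of `I(G)^{δ_c}` that are minimal with respect to divisibility. -/
def genW {n : ℕ} (G : SimpleGraph (Fin n)) (c : Fin n → ℕ) : Set (Fin n → ℕ) :=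
  {a | bdd c a ∧ memPow G (deltaC G c) a ∧
    ∀ b, bdd a b → memPow G (deltaC G c) b → b = a}

/-- The monomial `x_ρ · u / x_ξ`. -/
def exch {n : ℕ} (u : Fin n → ℕ) (ξ ρ : Fin n) : Fin n → ℕ :=
  fun i => if i = ρ then u i + 1 else if i = ξ then u i - 1 else u i

/-- `W(c,G)` enjoys the strong exchange property. -/
def SEPc {n : ℕ} (G : SimpleGraph (Fin n)) (c : Fin n → ℕ) : Prop :=
  ∀ u ∈ genW G c, ∀ v ∈ genW G c, ∀ ξ ρ : Fin n, v ξ < u ξ → u ρ < v ρ →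
    exch u ξ ρ ∈ genW G c

/-- The graph `G` enjoys the strong exchange property: `W(c,G)` does, for every
`c ∈ ℤ_{>0}^n`. -/
def SEP {n : ℕ} (G : SimpleGraph (Fin n)) : Prop :=
  ∀ c : Fin n → ℕ, (∀ i, 0 < c i) → SEPc G c

/-- The cycle graph on `Fin m`. -/
def cycleG (m : ℕ) : SimpleGraph (Fin m) :=
  SimpleGraph.fromRel (fun i j => (i.val + 1) % m = j.val)

/-- The path graph on `Fin m`. -/
def pathG (m : ℕ) : SimpleGraph (Fin m) :=
  SimpleGraph.fromRel (fun i j => i.val + 1 = j.val)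

/-- A set of monomials is of Veronese type: it equals `w · V^{(d)}(a)`, the set of
translates by a fixed monomial `w` of all monomials of degree `d` componentwise
bounded by `a`. -/
def IsVeronese {n : ℕ} (S : Set (Fin n → ℕ)) : Prop :=
  ∃ (w : Fin n → ℕ) (d : ℕ) (a : Fin n → ℕ), d ≤ ∑ i, a i ∧
    S = {u | ∃ v : Fin n → ℕ, (∀ i, v i ≤ a i) ∧ (∑ i, v i) = d ∧
      u = fun i => w i + v i}

/-- The graph on `Fin m` with edges given by a list of (0-based) pairs. -/
def listGraph (m : ℕ) (E : List (ℕ × ℕ)) : SimpleGraph (Fin m) :=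
  SimpleGraph.fromRel (fun i j => (i.val, j.val) ∈ E)

/-- The graph of Example `Ex_triangle`. -/
def G6 : SimpleGraph (Fin 6) := listGraph 6 [(0,1),(0,2),(1,2),(2,3),(3,4),(3,5)]

set_option maxRecDepth 10000 in
instance G6dec : DecidableRel G6.Adj := fun a b =>
  decidable_of_iff (a ≠ b ∧ (((a.val, b.val) ∈ [(0,1),(0,2),(1,2),(2,3),(3,4),(3,5)]) ∨
    ((b.val, a.val) ∈ [(0,1),(0,2),(1,2),(2,3),(3,4),(3,5)]))) Iff.rfl

private def cnt {n : ℕ} (p : Fin n × Fin n) (j : Fin n) : ℕ :=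
  (if p.1 = j then 1 else 0) + (if p.2 = j then 1 else 0)

lemma memPow_mono {n q : ℕ} {G : SimpleGraph (Fin n)} {a a' : Fin n → ℕ}
    (h : ∀ i, a i ≤ a' i) : memPow G q a → memPow G q a' :=
  fun ⟨e, h1, h2⟩ => ⟨e, h1, fun j => (h2 j).trans (h j)⟩

lemma memPow_succ {n q : ℕ} {G : SimpleGraph (Fin n)} {a : Fin n → ℕ} :
    memPow G (q + 1) a → memPow G q a := by
  rintro ⟨e, h1, h2⟩
  refine ⟨fun i => e i.castSucc, fun i => h1 _, fun j => le_trans ?_ (h2 j)⟩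
  rw [Fin.sum_univ_castSucc]
  exact Nat.le_add_right _ _

lemma memPow_anti {n : ℕ} {G : SimpleGraph (Fin n)} {a : Fin n → ℕ} {q q' : ℕ}
    (h : q ≤ q') : memPow G q' a → memPow G q a := by
  induction h with
  | refl => exact id
  | step _ ih => exact fun hm => ih (memPow_succ hm)

lemma memPow_two_iff {n : ℕ} {G : SimpleGraph (Fin n)} {a : Fin n → ℕ} :
    memPow G 2 a ↔ ∃ p q : Fin n × Fin n, G.Adj p.1 p.2 ∧ G.Adj q.1 q.2 ∧
      ∀ j, cnt p j + cnt q j ≤ a j := by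
  constructor
  · rintro ⟨e, h1, h2⟩
    exact ⟨e 0, e 1, h1 0, h1 1, fun j => by
      have := h2 j; rwa [Fin.sum_univ_two] at this⟩
  · rintro ⟨p, q, hp, hq, h⟩
    refine ⟨![p, q], fun i => by fin_cases i <;> simpa, fun j => ?_⟩
    rw [Fin.sum_univ_two]
    convert h j using 1
    simp only [cnt]
    split_ifs <;> simp_all

lemma memPow_three_iff {n : ℕ} {G : SimpleGraph (Fin n)} {a : Fin n → ℕ} :
    memPow G 3 a ↔ ∃ p q r : Fin n × Fin n, G.Adj p.1 p.2 ∧ G.Adj q.1 q.2 ∧ G.Adj r.1 r.2 ∧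
      ∀ j, cnt p j + cnt q j + cnt r j ≤ a j := by
  constructor
  · rintro ⟨e, h1, h2⟩
    exact ⟨e 0, e 1, e 2, h1 0, h1 1, h1 2, fun j => by
      have := h2 j; rwa [Fin.sum_univ_three] at this⟩
  · rintro ⟨p, q, r, hp, hq, hr, h⟩
    refine ⟨![p, q, r], fun i => by fin_cases i <;> simpa, fun j => ?_⟩
    rw [Fin.sum_univ_three]
    convert h j using 1
    simp [cnt]
    congr

set_option maxRecDepth 10000 in
lemma noThree : ¬ ∃ p q r : Fin 6 × Fin 6, G6.Adj p.1 p.2 ∧ G6.Adj q.1 q.2 ∧ G6.Adj r.1 r.2 ∧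
    ∀ j, cnt p j + cnt q j + cnt r j ≤ (fun _ : Fin 6 => 1) j := by decide

set_option maxRecDepth 10000 in
lemma noTwo : ¬ ∃ p q : Fin 6 × Fin 6, G6.Adj p.1 p.2 ∧ G6.Adj q.1 q.2 ∧
    ∀ j, cnt p j + cnt q j ≤ (![0,0,1,1,1,1] : Fin 6 → ℕ) j := by decide

lemma eq_of_sum_four {u b : Fin 6 → ℕ} {G : SimpleGraph (Fin 6)} (hs : ∑ i, u i = 4)
    (hb : ∀ i, b i ≤ u i) (hm : memPow G 2 b) : b = u := by
  obtain ⟨e, -, h2⟩ := hm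
  have h4 : 4 ≤ ∑ j, b j := by
    have key : ∑ j : Fin 6, ∑ i : Fin 2,
        ((if (e i).1 = j then 1 else 0) + (if (e i).2 = j then 1 else 0)) = 4 := by
      rw [Finset.sum_comm]
      have h1 : ∀ i : Fin 2, ∑ j : Fin 6,
          ((if (e i).1 = j then (1:ℕ) else 0) + (if (e i).2 = j then 1 else 0)) = 2 := by
        intro i
        rw [Finset.sum_add_distrib]
        simp [Finset.sum_ite_eq]
      simp [h1]
    calc (4:ℕ) = _ := key.symm
    _ ≤ ∑ j, b j := Finset.sum_le_sum fun j _ => h2 j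
  by_contra hne
  obtain ⟨i, hi⟩ := Function.ne_iff.mp hne
  have hlt : ∑ j, b j < ∑ j, u j :=
    Finset.sum_lt_sum (fun j _ => hb j) ⟨i, Finset.mem_univ i, lt_of_le_of_ne (hb i) hi⟩
  omega

theorem stmt6 :
    IsGreatest {q | ∃ a, bdd (fun _ : Fin 6 => 1) a ∧ memPow G6 q a} 2 ∧
    (![1,0,1,1,1,0] : Fin 6 → ℕ) ∈ genW G6 (fun _ => 1) ∧
    (![0,1,1,1,0,1] : Fin 6 → ℕ) ∈ genW G6 (fun _ => 1) ∧
    ¬ memPow G6 2 (![0,0,1,1,1,1] : Fin 6 → ℕ) ∧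
    ¬ SEPc G6 (fun _ => 1) := by
  have hgreat : IsGreatest {q | ∃ a, bdd (fun _ : Fin 6 => 1) a ∧ memPow G6 q a} 2 := by
    constructor
    · exact ⟨fun _ => 1, fun i => le_refl 1,
        memPow_two_iff.mpr ⟨(0,1), (3,4), by decide, by decide, by decide⟩⟩
    · rintro q ⟨a, hb, hm⟩
      by_contra h
      push_neg at h
      exact noThree (memPow_three_iff.mp (memPow_anti h (memPow_mono hb hm)))
  have hδ : deltaC G6 (fun _ => 1) = 2 := hgreat.csSup_eq
  have hnot2 : ¬ memPow G6 2 (![0,0,1,1,1,1] : Fin 6 → ℕ) :=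
    fun hm => noTwo (memPow_two_iff.mp hm)
  have hu : (![1,0,1,1,1,0] : Fin 6 → ℕ) ∈ genW G6 (fun _ => 1) := by
    refine ⟨fun i => by fin_cases i <;> decide, ?_, ?_⟩
    · rw [hδ]
      exact memPow_two_iff.mpr ⟨(0,2), (3,4), by decide, by decide, by decide⟩
    · intro b hb hm
      rw [hδ] at hm
      exact eq_of_sum_four (by decide) hb hm
  have hv : (![0,1,1,1,0,1] : Fin 6 → ℕ) ∈ genW G6 (fun _ => 1) := by
    refine ⟨fun i => by fin_cases i <;> decide, ?_, ?_⟩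
    · rw [hδ]
      exact memPow_two_iff.mpr ⟨(1,2), (3,5), by decide, by decide, by decide⟩
    · intro b hb hm
      rw [hδ] at hm
      exact eq_of_sum_four (by decide) hb hm
  refine ⟨hgreat, hu, hv, hnot2, ?_⟩
  intro h
  have h5 := h _ hu _ hv 0 5 (by decide) (by decide)
  have hexch : exch (![1,0,1,1,1,0] : Fin 6 → ℕ) 0 5 = ![0,0,1,1,1,1] := by
    funext i; fin_cases i <;> rfl
  have hm := h5.2.1
  rw [hδ, hexch] at hm
  exact hnot2 hm
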